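/- Let X, Y be real normed spaces, T : X → Y a bounded linear operator, q > 1 with conjugate exponent q*, S(y) := (1/q)‖y‖^q, S*(p) := (1/q*)‖p‖^{q*}, α > 0, g ∈ Y, and R : X → ℝ convex. Let n ≥ 1 and let f₁, …, f_n ∈ X and p₁, …, p_n ∈ Y* satisfy: (i) f₁ minimizes h ↦ (1/α)S(Th − g) + R(h) over X; (ii) for each 2 ≤ k ≤ n, the functional ξ_{k−1} := (Σ_{j=1}^{k−1} p_j) ∘ T ∈ X* is a subgradient of R at f_{k−1}, and f_k minimizes h ↦ (1/α)S(Th − g) + D_R^{ξ_{k−1}}(h, f_{k−1}) over X; (iii) for each 1 ≤ k ≤ n, −α p_k ∈ ∂S(T f_k − g). Suppose further f† ∈ X and p̄ ∈ Y* satisfy p̄ ∘ T ∈ ∂R(f†), and set s := p̄ − Σ_{k=1}^{n−1} p_k ∈ Y*. Then for every f ∈ X: D_R^{p̄∘T}(f_n, f†) ≤ (1/α)S(T f − g) + s(T f − g) + (1/α)S*(−α s) + D_R^{p̄∘T}(f, f†). -/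

import Mathlib

/-- Basic error bound for Bregman iterated Tikhonov regularization
(Lemma 2.3 / `Lemma11.19` of the paper): for the `n`-th Bregman iterate `f n`
one has, for all `f' ∈ X`,
`D_R^{p̄∘T}(f n, f†) ≤ (1/α)S(Tf'−g) + s(Tf'−g) + (1/α)S*(−αs) + D_R^{p̄∘T}(f', f†)`
where `s = p̄ − Σ_{k=1}^{n−1} p_k`. -/
theorem stmt_1 {X Y : Type*} [NormedAddCommGroup X] [NormedSpace ℝ X]
    [NormedAddCommGroup Y] [NormedSpace ℝ Y]
    (T : X →L[ℝ] Y) (q qs : ℝ) (hq : 1 < q) (hqs : 1 / q + 1 / qs = 1)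
    (α : ℝ) (hα : 0 < α) (g : Y)
    (R : X → ℝ) (hR : ConvexOn ℝ Set.univ R)
    (n : ℕ) (hn : 1 ≤ n) (f : ℕ → X) (p : ℕ → Y →L[ℝ] ℝ)
    -- (i) f 1 minimizes the Tikhonov functional
    (hf1 : ∀ h : X, 1 / α * (1 / q * ‖T (f 1) - g‖ ^ q) + R (f 1)
      ≤ 1 / α * (1 / q * ‖T h - g‖ ^ q) + R h)
    -- (ii) for 2 ≤ k ≤ n : ξ_{k-1} = (Σ_{j=1}^{k-1} p_j)∘T ∈ ∂R(f_{k-1}) and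
    --       f k minimizes the Bregman-iterated Tikhonov functional
    (hfk : ∀ k : ℕ, 2 ≤ k → k ≤ n →
      (∀ h : X, R (f (k - 1))
          + ((∑ j ∈ Finset.Icc 1 (k - 1), p j).comp T) (h - f (k - 1)) ≤ R h) ∧
      (∀ h : X,
        1 / α * (1 / q * ‖T (f k) - g‖ ^ q)
          + (R (f k) - R (f (k - 1))
            - ((∑ j ∈ Finset.Icc 1 (k - 1), p j).comp T) (f k - f (k - 1)))
        ≤ 1 / α * (1 / q * ‖T h - g‖ ^ q)
          + (R h - R (f (k - 1))
            - ((∑ j ∈ Finset.Icc 1 (k - 1), p j).comp T) (h - f (k - 1)))))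
    -- (iii) −α p_k ∈ ∂S(T f_k − g) for 1 ≤ k ≤ n
    (hpk : ∀ k : ℕ, 1 ≤ k → k ≤ n →
      ∀ y : Y, 1 / q * ‖T (f k) - g‖ ^ q + ((-α) • p k) (y - (T (f k) - g))
        ≤ 1 / q * ‖y‖ ^ q)
    -- source element : p̄ ∘ T ∈ ∂R(f†)
    (fdag : X) (pbar : Y →L[ℝ] ℝ)
    (hpbar : ∀ h : X, R fdag + (pbar.comp T) (h - fdag) ≤ R h) :
    ∀ f' : X,
      R (f n) - R fdag - (pbar.comp T) (f n - fdag)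
        ≤ 1 / α * (1 / q * ‖T f' - g‖ ^ q)
          + (pbar - ∑ k ∈ Finset.Icc 1 (n - 1), p k) (T f' - g)
          + 1 / α * (1 / qs * ‖(-α) • (pbar - ∑ k ∈ Finset.Icc 1 (n - 1), p k)‖ ^ qs)
          + (R f' - R fdag - (pbar.comp T) (f' - fdag)) := by
  intro f'
  set s : Y →L[ℝ] ℝ := pbar - ∑ k ∈ Finset.Icc 1 (n - 1), p k with hs
  set ξ : Y →L[ℝ] ℝ := ∑ j ∈ Finset.Icc 1 (n - 1), p j with hξ
  -- key minimization inequality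
  have key : 1 / α * (1 / q * ‖T (f n) - g‖ ^ q) + R (f n) - ξ (T (f n))
      ≤ 1 / α * (1 / q * ‖T f' - g‖ ^ q) + R f' - ξ (T f') := by
    rcases eq_or_lt_of_le hn with h1 | h2
    · have hn1 : n = 1 := h1.symm
      subst hn1
      have hempty : Finset.Icc 1 0 = (∅ : Finset ℕ) := by decide
      have := hf1 f'
      simp only [hξ, hempty, Finset.sum_empty, ContinuousLinearMap.zero_apply]
      linarith
    · have h2' : (2 : ℕ) ≤ n := h2
      have hmin := (hfk n h2' le_rfl).2 f'
      simp only [map_sub, ContinuousLinearMap.comp_apply] at hmin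
      linarith
  -- Young's inequality step
  have hconj : q.HolderConjugate qs := Real.holderConjugate_iff.mpr ⟨hq, by rw [← one_div, ← one_div]; exact hqs⟩
  have hval : ((-α) • s) (T (f n) - g) ≤ ‖(-α) • s‖ * ‖T (f n) - g‖ :=
    le_trans (le_abs_self _) (((-α) • s).le_opNorm _)
  have hyoung : ‖(-α) • s‖ * ‖T (f n) - g‖
      ≤ ‖T (f n) - g‖ ^ q / q + ‖(-α) • s‖ ^ qs / qs := by
    have := Real.young_inequality_of_nonneg (norm_nonneg (T (f n) - g))
      (norm_nonneg ((-α) • s)) hconj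
    linarith [this]
  have hsmul : ((-α) • s) (T (f n) - g) = -α * s (T (f n) - g) := by
    simp
  have young : -(α * s (T (f n) - g))
      ≤ 1 / q * ‖T (f n) - g‖ ^ q + 1 / qs * ‖(-α) • s‖ ^ qs := by
    have h := le_trans hval hyoung
    rw [hsmul] at h
    have hq0 : (0:ℝ) < q := lt_trans one_pos hq
    have hqs0 : (0:ℝ) < qs := hconj.symm.pos
    rw [div_eq_inv_mul, div_eq_inv_mul, inv_eq_one_div, inv_eq_one_div] at h
    linarith
  -- divide young by α and combine
  have young' : -(s (T (f n) - g))
      ≤ 1 / α * (1 / q * ‖T (f n) - g‖ ^ q) + 1 / α * (1 / qs * ‖(-α) • s‖ ^ qs) := by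
    have h := mul_le_mul_of_nonneg_left young (le_of_lt (one_div_pos.mpr hα))
    have he : (1 / α) * -(α * s (T (f n) - g)) = -(s (T (f n) - g)) := by
      field_simp
    rw [he, mul_add] at h
    exact h
  have hsapp : ∀ z : Y, s z = pbar z - ξ z := by
    intro z
    simp [hs, hξ]
  have young'' : -(s (T (f n)) - s g)
      ≤ 1 / α * (1 / q * ‖T (f n) - g‖ ^ q) + 1 / α * (1 / qs * ‖(-α) • s‖ ^ qs) := by
    rw [← map_sub]
    exact young'
  simp only [map_sub, ContinuousLinearMap.comp_apply]
  linarith [key, young'', hsapp (T (f n)), hsapp g, hsapp (T f')]
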